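/- Let n ≥ 2, N = 2^n, and let r = 2^s with 0 ≤ s ≤ n−1. Then the periodic state Ψ^n_{0,r} factors off its first qubit as |+⟩: for every x < N one has Ψ^n_{0,r} x = (1/√2) · Ψ^{n−1}_{0,r} (x mod 2^{n−1}), where Ψ^{n−1}_{0,r} is the (n−1)-qubit periodic state with shift 0 and period r. -/

import Mathlib

open scoped BigOperators

noncomputable section

/-- `bit n i x` is the i-th binary digit of `x`, counted from the most significant. -/
def bit (n : ℕ) (i : Fin n) (x : Fin (2^n)) : Fin 2 :=
  ⟨((x : ℕ) / 2^(n - 1 - (i : ℕ))) % 2, Nat.mod_lt _ (by norm_num)⟩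

/-- An n-qubit state is separable if its amplitudes factor as a product over the qubits. -/
def Separable (n : ℕ) (ψ : Fin (2^n) → ℂ) : Prop :=
  ∃ v : Fin n → Fin 2 → ℂ, ∀ x, ψ x = ∏ i, v i (bit n i x)

/-- The periodic state with shift `l` and period `r`:
amplitude `1/√A` at `x = l + i·r` for `0 ≤ i < A`, with `A = ⌈(2^n - l)/r⌉`. -/
def periodicState (n l r : ℕ) : Fin (2^n) → ℂ := fun x =>
  if ∃ i < (2^n - l + r - 1) / r, (x : ℕ) = l + i * r
  then (1 : ℂ) / Real.sqrt (((2^n - l + r - 1) / r : ℕ)) else 0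

/-- Quantum Fourier transform of an n-qubit state. -/
def QFT (n : ℕ) (ψ : Fin (2^n) → ℂ) : Fin (2^n) → ℂ := fun y =>
  (1 / (Real.sqrt (2^n) : ℝ) : ℂ) * ∑ x : Fin (2^n),
    Complex.exp (2 * Real.pi * Complex.I * (x : ℕ) * (y : ℕ) / ((2^n : ℕ) : ℂ)) * ψ x

/-- The generalized GHZ state. -/
def GHZ (n : ℕ) : Fin (2^n) → ℂ := fun x =>
  if (x : ℕ) = 0 ∨ (x : ℕ) = 2^n - 1 then (1 : ℂ) / Real.sqrt 2 else 0

/-- SLOCC equivalence of two n-qubit states. -/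
def SLOCCEquiv (n : ℕ) (ψ φ : Fin (2^n) → ℂ) : Prop :=
  ∃ (g : Fin n → Matrix (Fin 2) (Fin 2) ℂ) (c : ℂ),
    c ≠ 0 ∧ (∀ i, IsUnit (g i)) ∧
    ∀ x, φ x = c * ∑ y : Fin (2^n), (∏ i, g i (bit n i x) (bit n i y)) * ψ y


lemma Acomp (n s : ℕ) (hs : s ≤ n) : (2^n - 0 + 2^s - 1) / 2^s = 2^(n-s) := by
  have h : 2^n = 2^s * 2^(n-s) := by rw [← pow_add]; congr 1; omega
  have hp : 0 < 2^s := Nat.pow_pos (n := s) (by norm_num)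
  rw [Nat.sub_zero, h]
  have : 2^s * 2^(n-s) + 2^s - 1 = (2^s - 1) + 2^s * 2^(n-s) := by omega
  rw [this, Nat.add_mul_div_left _ _ hp, Nat.div_eq_of_lt (by omega)]
  omega

lemma pow_split (n s : ℕ) (hn : 2 ≤ n) (hs : s ≤ n - 1) :
    (2:ℕ)^(n-s) = 2 * 2^(n-1-s) := by
  have h : n - s = (n-1-s)+1 := by omega
  rw [h, pow_succ, Nat.mul_comm]

lemma cond_iff (n s x : ℕ) (hs : s ≤ n) (hx : x < 2^n) :
    (∃ i < 2^(n-s), x = 0 + i * 2^s) ↔ 2^s ∣ x := by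
  constructor
  · rintro ⟨i, _, rfl⟩; exact ⟨i, by ring⟩
  · rintro ⟨i, rfl⟩
    refine ⟨i, ?_, by ring⟩
    have h : 2^n = 2^(n-s) * 2^s := by rw [← pow_add]; congr 1; omega
    by_contra hc
    push_neg at hc
    have : 2^n ≤ 2^s * i := by
      rw [h]; exact (Nat.mul_le_mul_right _ hc).trans_eq (Nat.mul_comm _ _)
    omega

/-- for `l = 0` and `r = 2^s` with `s ≤ n−1`, the periodic state factors
off its first qubit as `|+⟩`. -/
theorem stmt_1 (n s : ℕ) (hn : 2 ≤ n) (hs : s ≤ n - 1) :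
    ∀ x : Fin (2^n),
      periodicState n 0 (2^s) x =
        ((1 / Real.sqrt 2 : ℝ) : ℂ) *
          periodicState (n-1) 0 (2^s) ⟨(x : ℕ) % 2^(n-1), Nat.mod_lt _ (by positivity)⟩ := by
  intro x
  unfold periodicState
  simp only [Acomp n s (by omega), Acomp (n-1) s hs]
  have h1 : (∃ i < 2^(n-s), (x:ℕ) = 0 + i * 2^s) ↔ 2^s ∣ (x:ℕ) :=
    cond_iff n s x (by omega) x.isLt
  have h2 : (∃ i < 2^(n-1-s), (x:ℕ) % 2^(n-1) = 0 + i * 2^s) ↔ 2^s ∣ (x:ℕ) % 2^(n-1) :=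
    cond_iff (n-1) s _ hs (Nat.mod_lt _ (by positivity))
  have hd : 2^s ∣ (x:ℕ) % 2^(n-1) ↔ 2^s ∣ (x:ℕ) :=
    Nat.dvd_mod_iff (pow_dvd_pow 2 hs)
  by_cases hdvd : 2^s ∣ (x:ℕ)
  · rw [if_pos (h1.mpr hdvd), if_pos (h2.mpr (hd.mpr hdvd))]
    have hns := pow_split n s hn hs
    rw [hns]
    push_cast
    rw [Real.sqrt_mul (by norm_num : (0:ℝ) ≤ 2)]
    push_cast
    ring
  · rw [if_neg (fun h => hdvd (h1.mp h)), if_neg (fun h => hdvd (hd.mp (h2.mp h)))]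
    ring
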